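/- Let f be a neighbor function and δ ≥ 0. If x, y ≥ 0 satisfy |f(x) − f(y)| ≤ δ, then for every t ≥ 0 one has |f(x + t) − f(y + t)| ≤ δ. (This shows that the f-neighbor sensitivity of f composed with a group-by sum query over a confidential attribute with distance parameter δ is at most δ.) -/

import Mathlib

/-- A neighbor function: strictly increasing, continuous and concave on `[0, ∞)`,
and such that `x ↦ f (exp x)` is convex on `ℝ`. -/
def IsNeighborFun (f : ℝ → ℝ) : Prop :=
  StrictMonoOn f (Set.Ici (0 : ℝ)) ∧ ContinuousOn f (Set.Ici (0 : ℝ)) ∧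
    ConcaveOn ℝ (Set.Ici (0 : ℝ)) f ∧ ConvexOn ℝ Set.univ (fun x => f (Real.exp x))

theorem neighbor_sensitivity_groupby_sum (f : ℝ → ℝ) (hf : IsNeighborFun f)
    (δ : ℝ) (hδ : 0 ≤ δ) (x y : ℝ) (hx : 0 ≤ x) (hy : 0 ≤ y)
    (hclose : |f x - f y| ≤ δ) :
    ∀ t : ℝ, 0 ≤ t → |f (x + t) - f (y + t)| ≤ δ := by
  obtain ⟨hmono, hcont, hconc, hconv⟩ := hf
  -- Key concavity fact: f (b + t) + f a ≤ f b + f (a + t) for 0 ≤ a ≤ b, 0 ≤ t.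
  have key : ∀ a b t : ℝ, 0 ≤ a → a ≤ b → 0 ≤ t →
      f (b + t) + f a ≤ f b + f (a + t) := by
    intro a b t ha hab ht
    rcases eq_or_lt_of_le (by linarith : (0:ℝ) ≤ b - a + t) with h | h
    · have hba : b = a := by linarith
      have ht0 : t = 0 := by linarith
      rw [hba, ht0]; ring_nf; exact le_refl _
    · set d := b - a + t with hd
      have hd0 : 0 < d := h
      set lam := (b - a) / d with hlam
      have hlam0 : 0 ≤ lam := div_nonneg (by linarith) hd0.le
      have hlam1 : 0 ≤ 1 - lam := by
        have : lam ≤ 1 := by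
          rw [hlam, div_le_one hd0]; linarith
        linarith
      have hmemA : a ∈ Set.Ici (0:ℝ) := ha
      have hmemB : b + t ∈ Set.Ici (0:ℝ) := by
        simp only [Set.mem_Ici]; linarith
      have e1 : lam • a + (1 - lam) • (b + t) = a + t := by
        have h1 : (1 - lam) = t / d := by
          field_simp [hlam]; rw [hlam, sub_mul, one_mul, div_mul_cancel₀ _ hd0.ne']; linarith
        simp only [smul_eq_mul, h1, hlam]
        field_simp
        ring
      have e2 : (1 - lam) • a + lam • (b + t) = b := by
        have h1 : (1 - lam) = t / d := by
          field_simp [hlam]; rw [hlam, sub_mul, one_mul, div_mul_cancel₀ _ hd0.ne']; linarith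
        simp only [smul_eq_mul, h1, hlam]
        field_simp
        ring
      have h1 := hconc.2 hmemA hmemB hlam0 hlam1 (by ring)
      have h2 := hconc.2 hmemA hmemB hlam1 hlam0 (by ring)
      rw [e1] at h1
      rw [e2] at h2
      simp only [smul_eq_mul] at h1 h2
      nlinarith [h1, h2]
  -- Main argument, assuming b ≤ a.
  have main : ∀ a b : ℝ, 0 ≤ a → 0 ≤ b → b ≤ a → |f a - f b| ≤ δ →
      ∀ t : ℝ, 0 ≤ t → |f (a + t) - f (b + t)| ≤ δ := by
    intro a b ha hb hba hcl t ht
    have hmem1 : b + t ∈ Set.Ici (0:ℝ) := by simp only [Set.mem_Ici]; linarith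
    have hmem2 : a + t ∈ Set.Ici (0:ℝ) := by simp only [Set.mem_Ici]; linarith
    have hfle : f (b + t) ≤ f (a + t) :=
      hmono.monotoneOn hmem1 hmem2 (by linarith)
    have hfab : f b ≤ f a := hmono.monotoneOn hb ha hba
    have hcl' : f a - f b ≤ δ := le_trans (le_abs_self _) hcl
    have hk := key b a t hb hba ht
    rw [abs_of_nonneg (by linarith : (0:ℝ) ≤ f (a + t) - f (b + t))]
    linarith
  intro t ht
  rcases le_total y x with h | h
  · exact main x y hx hy h hclose t ht
  · rw [abs_sub_comm]
    rw [abs_sub_comm] at hclose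
    exact main y x hy hx h hclose t ht
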